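/- arXiv:2404.09972 — 4 statements merged into one kernel-verified Lean document; each statement's English description precedes it below -/
import Mathlib

section
/- Let $(G, \Gamma, \rhd_1, \rhd_2)$ be a matched pair of groups. Define $g \rhd_1^G (h,t) := ((t \rhd_2 g)hg^{-1},\, g \rhd_1 t)$ for $g, h \in G$, $t \in \Gamma$, and $(h,t) \rhd_2^G g := t \rhd_2 g$. Then $(G,\, G \times \Gamma,\, \rhd_1^G,\, \rhd_2^G)$ is a matched pair of groups, where $G \times \Gamma$ denotes the direct product group. -/
/-- A matched pair of groups. -/
def IsMatchedPair {G Γ : Type*} [Group G] [Group Γ] (r1 : G → Γ → Γ) (r2 : Γ → G → G) : Prop :=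
  (∀ s, r1 1 s = s) ∧ (∀ g h s, r1 (g * h) s = r1 g (r1 h s)) ∧
  (∀ g, r2 1 g = g) ∧ (∀ s t g, r2 (s * t) g = r2 s (r2 t g)) ∧
  (∀ g, r1 g 1 = 1) ∧ (∀ s, r2 s 1 = 1) ∧
  (∀ g s t, r1 g (s * t) = r1 (r2 t g) s * r1 g t) ∧
  (∀ s g h, r2 s (g * h) = r2 (r1 h s) g * r2 s h)

/-- The action `g ▷₁ᴳ (h,t) := ((t ▷₂ g) h g⁻¹, g ▷₁ t)` of `G` on the set `G × Γ`. -/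
def r1G {G Γ : Type*} [Group G] [Group Γ] (r1 : G → Γ → Γ) (r2 : Γ → G → G) :
    G → G × Γ → G × Γ :=
  fun g p => (r2 p.2 g * p.1 * g⁻¹, r1 g p.2)

/-- The action `(h,t) ▷₂ᴳ g := t ▷₂ g` of `G × Γ` on the set `G`. -/
def r2G {G Γ : Type*} [Group G] [Group Γ] (r2 : Γ → G → G) : G × Γ → G → G :=
  fun p g => r2 p.2 g

/-- `(G, G × Γ, ▷₁ᴳ, ▷₂ᴳ)` is a matched pair of groups. -/
theorem statement_6 {G Γ : Type*} [Group G] [Group Γ]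
    (r1 : G → Γ → Γ) (r2 : Γ → G → G) (h : IsMatchedPair r1 r2) :
    IsMatchedPair (r1G r1 r2) (r2G r2) := by
  obtain ⟨h1, h2, h3, h4, h5, h6, h7, h8⟩ := h
  refine ⟨?_, ?_, ?_, ?_, ?_, ?_, ?_, ?_⟩ <;>
    simp only [r1G, r2G, Prod.ext_iff, Prod.mul_def, Prod.fst_one, Prod.snd_one, Prod.mk.injEq]
  · intro p; simp [h1, h6]
  · intro g g' p; rw [h8, h2]; constructor <;> group
  · intro g; exact h3 g
  · intro p q g; exact h4 _ _ _
  · intro g; simp [h3, h5]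
  · intro p; exact h6 _
  · intro g p q; rw [h7, h4]; constructor <;> group
  · intro p g g'; rw [h8]
end

section
/- Let $(G, \Gamma, \rhd_1, \rhd_2)$ be a matched pair of groups with Zappa–Szép product $G \bowtie \Gamma$. Define $(g,s) \,\tilde\rhd_1\, (h,t) := g \rhd_1^G (s \rhd_1^\Gamma (h,t))$ and $(h,t) \,\tilde\rhd_2\, (g,s) := ((s \rhd_1^\Gamma (h,t))_G \rhd_2^G g,\ (h,t) \rhd_2^\Gamma s)$, where $g \rhd_1^G (h,t) = ((t \rhd_2 g)hg^{-1}, g \rhd_1 t)$, $s \rhd_1^\Gamma (h,t) = (s \rhd_2 h, (h \rhd_1 s)ts^{-1})$, $(h,t) \rhd_2^G g = t \rhd_2 g$, $(h,t) \rhd_2^\Gamma s = h \rhd_1 s$, and $(s \rhd_1^\Gamma (h,t))_G = s \rhd_2 h$. Then $(G \bowtie \Gamma,\ G \times \Gamma,\ \tilde\rhd_1,\ \tilde\rhd_2)$ is a matched pair of groups. -/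
/-- The Zappa–Szép multiplication on `G × Γ` (the product of `G ⋈ Γ`). -/
def zsMul {G Γ : Type*} [Group G] [Group Γ] (r1 : G → Γ → Γ) (r2 : Γ → G → G) :
    G × Γ → G × Γ → G × Γ :=
  fun x y => (x.1 * (r2 x.2 y.1⁻¹)⁻¹, r1 y.1⁻¹ x.2 * y.2)

/-- The induced action `(g,s) ⋗₁ (h,t)` of `G ⋈ Γ` on the set `G × Γ`. -/
def tR1 {G Γ : Type*} [Group G] [Group Γ] (r1 : G → Γ → Γ) (r2 : Γ → G → G) :
    G × Γ → G × Γ → G × Γ :=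
  fun x a => (r2 (r1 a.1 x.2 * a.2 * x.2⁻¹) x.1 * r2 x.2 a.1 * x.1⁻¹,
    r1 x.1 (r1 a.1 x.2 * a.2 * x.2⁻¹))

/-- The induced action `(h,t) ⋗₂ (g,s)` of `G × Γ` on the set `G ⋈ Γ`. -/
def tR2 {G Γ : Type*} [Group G] [Group Γ] (r1 : G → Γ → Γ) (r2 : Γ → G → G) :
    G × Γ → G × Γ → G × Γ :=
  fun a x => (r2 (r1 a.1 x.2 * a.2 * x.2⁻¹) x.1, r1 a.1 x.2)

/-- `(G ⋈ Γ, G × Γ, ⋗₁, ⋗₂)` is a matched pair of groups:  the matched-pair axioms hold,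
where the first group is the Zappa–Szép product `G ⋈ Γ` (with multiplication `zsMul` and
identity `(1,1)`) and the second is the direct product `G × Γ`. -/
theorem statement_8 {G Γ : Type*} [Group G] [Group Γ]
    (r1 : G → Γ → Γ) (r2 : Γ → G → G) (h : IsMatchedPair r1 r2) :
    (∀ a : G × Γ, tR1 r1 r2 ((1 : G), (1 : Γ)) a = a) ∧
    (∀ x y a : G × Γ, tR1 r1 r2 (zsMul r1 r2 x y) a = tR1 r1 r2 x (tR1 r1 r2 y a)) ∧
    (∀ x : G × Γ, tR2 r1 r2 ((1 : G), (1 : Γ)) x = x) ∧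
    (∀ a b x : G × Γ, tR2 r1 r2 (a * b) x = tR2 r1 r2 a (tR2 r1 r2 b x)) ∧
    (∀ x : G × Γ, tR1 r1 r2 x (1 : G × Γ) = 1) ∧
    (∀ a : G × Γ, tR2 r1 r2 a ((1 : G), (1 : Γ)) = ((1 : G), (1 : Γ))) ∧
    (∀ x a b : G × Γ, tR1 r1 r2 x (a * b) = tR1 r1 r2 (tR2 r1 r2 b x) a * tR1 r1 r2 x b) ∧
    (∀ a x y : G × Γ, tR2 r1 r2 a (zsMul r1 r2 x y)
      = zsMul r1 r2 (tR2 r1 r2 (tR1 r1 r2 y a) x) (tR2 r1 r2 a y)) := by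
  
  obtain ⟨e1, m1, e2, m2, o1, o2, c1, c2⟩ := h
  have i1 : ∀ (g : G) (s : Γ), r1 g⁻¹ (r1 g s) = s := fun g s => by
    rw [← m1, inv_mul_cancel, e1]
  have i1' : ∀ (g : G) (s : Γ), r1 g (r1 g⁻¹ s) = s := fun g s => by
    rw [← m1, mul_inv_cancel, e1]
  have i2 : ∀ (s : Γ) (g : G), r2 s⁻¹ (r2 s g) = g := fun s g => by
    rw [← m2, inv_mul_cancel, e2]
  have d1 : ∀ (g : G) (s : Γ), r1 (r2 s g) s⁻¹ = (r1 g s)⁻¹ := fun g s => by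
    have h0 := c1 g s⁻¹ s
    rw [inv_mul_cancel, o1] at h0
    exact eq_inv_of_mul_eq_one_left h0.symm
  have d2 : ∀ (s : Γ) (g : G), r2 (r1 g s) g⁻¹ = (r2 s g)⁻¹ := fun s g => by
    have h0 := c2 s g⁻¹ g
    rw [inv_mul_cancel, o2] at h0
    exact eq_inv_of_mul_eq_one_left h0.symm
  have d2' : ∀ (s : Γ) (g : G), r2 (r1 g⁻¹ s) g = (r2 s g⁻¹)⁻¹ := fun s g => by
    have h0 := d2 s g⁻¹; rwa [inv_inv] at h0
  have KA : ∀ (g' : G) (s R w : Γ),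
      r1 (r2 (r1 g'⁻¹ s) g') (R * w * (r1 g'⁻¹ s)⁻¹)
        = r1 (r2 w g') R * r1 g' w * s⁻¹ := by
    intro g' s R w
    rw [c1 _ (R * w) (r1 g'⁻¹ s)⁻¹, i2, c1 g' R w, d1 g', i1']
  have KB : ∀ (g g' : G) (s σ : Γ),
      r2 (σ * (r1 g'⁻¹ s)⁻¹) (g * (r2 s g'⁻¹)⁻¹)
        = r2 (r1 (r2 (r1 g'⁻¹ s) g') (σ * (r1 g'⁻¹ s)⁻¹)) g * r2 σ g' := by
    intro g g' s σ
    rw [← d2' s g', c2 _ g _, ← m2, inv_mul_cancel_right]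
  refine ⟨?_, ?_, ?_, ?_, ?_, ?_, ?_, ?_⟩
  · -- G1
    rintro ⟨hA, t⟩
    simp [tR1, o1, o2, e1, e2]
  · -- G2
    rintro ⟨g, s⟩ ⟨g', s'⟩ ⟨hA, t⟩
    simp only [tR1, zsMul, Prod.mk.injEq]
    have hwz : r1 hA (r1 g'⁻¹ s * s') * t * (r1 g'⁻¹ s * s')⁻¹
        = r1 (r2 s' hA) (r1 g'⁻¹ s) * (r1 hA s' * t * s'⁻¹) * (r1 g'⁻¹ s)⁻¹ := by
      rw [c1 hA (r1 g'⁻¹ s) s']; group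
    have hW : r1 (r2 (r1 g'⁻¹ s) g')
          (r1 (r2 s' hA) (r1 g'⁻¹ s) * (r1 hA s' * t * s'⁻¹) * (r1 g'⁻¹ s)⁻¹)
        = r1 (r2 (r1 hA s' * t * s'⁻¹) g' * r2 s' hA * g'⁻¹) s
            * r1 g' (r1 hA s' * t * s'⁻¹) * s⁻¹ := by
      rw [KA, m1, m1]
    refine ⟨?_, ?_⟩
    · rw [hwz, KB g g' s _, hW, c2 s _ g'⁻¹, c2 (r1 g'⁻¹ s) _ _,
        m2 (r1 (r2 s' hA) (r1 g'⁻¹ s)) _ g', m2 (r1 g'⁻¹ s) s' hA]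
      group
    · rw [hwz, ← d2' s g', m1, hW]
  · -- G3
    rintro ⟨g, s⟩
    simp [tR2, e1, e2]
  · -- G4
    rintro ⟨hA, tA⟩ ⟨hB, tB⟩ ⟨g, s⟩
    simp only [tR2, Prod.mk_mul_mk, Prod.mk.injEq]
    refine ⟨?_, ?_⟩
    · rw [m1, ← m2]
      congr 1
      group
    · rw [m1]
  · -- G5
    rintro ⟨g, s⟩
    simp [tR1, e1, e2, o1, o2, Prod.ext_iff]
  · -- G6
    rintro ⟨hA, t⟩
    simp [tR2, o1, o2]
  · -- G7
    rintro ⟨g, s⟩ ⟨hA, tA⟩ ⟨hB, tB⟩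
    simp only [tR1, tR2, Prod.mk_mul_mk, Prod.mk.injEq]
    have hw : r1 (hA * hB) s * (tA * tB) * s⁻¹
        = (r1 hA (r1 hB s) * tA * (r1 hB s)⁻¹) * (r1 hB s * tB * s⁻¹) := by
      rw [m1]; group
    refine ⟨?_, ?_⟩
    · rw [hw, m2, c2 s hA hB]
      group
    · rw [hw, c1]
  · -- G8
    rintro ⟨hA, t⟩ ⟨g, s⟩ ⟨g', s'⟩
    simp only [tR2, tR1, zsMul, Prod.mk.injEq]
    have hwz : r1 hA (r1 g'⁻¹ s * s') * t * (r1 g'⁻¹ s * s')⁻¹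
        = r1 (r2 s' hA) (r1 g'⁻¹ s) * (r1 hA s' * t * s'⁻¹) * (r1 g'⁻¹ s)⁻¹ := by
      rw [c1 hA (r1 g'⁻¹ s) s']; group
    have hW : r1 (r2 (r1 g'⁻¹ s) g')
          (r1 (r2 s' hA) (r1 g'⁻¹ s) * (r1 hA s' * t * s'⁻¹) * (r1 g'⁻¹ s)⁻¹)
        = r1 (r2 (r1 hA s' * t * s'⁻¹) g' * r2 s' hA * g'⁻¹) s
            * r1 g' (r1 hA s' * t * s'⁻¹) * s⁻¹ := by
      rw [KA, m1, m1]
    refine ⟨?_, ?_⟩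
    · rw [hwz, KB g g' s _, hW, ← d2', m1, m1, i1,
        m2 (r1 (r2 s' hA) (r1 g'⁻¹ s)) (r1 hA s' * t * s'⁻¹) g']
    · rw [c1 hA (r1 g'⁻¹ s) s', m1, m1, i1]
end

section
/- Let $(G, \Gamma, \rhd_1, \rhd_2)$ be a matched pair of groups, and let $(G \bowtie \Gamma, G \times \Gamma, \tilde\rhd_1, \tilde\rhd_2)$ be the induced matched pair with $(g,s) \tilde\rhd_1 (h,t) = ((((h \rhd_1 s)ts^{-1}) \rhd_2 g)(s \rhd_2 h)g^{-1},\ g \rhd_1 ((h \rhd_1 s)ts^{-1}))$ and $(h,t) \tilde\rhd_2 (g,s) = (((h \rhd_1 s)ts^{-1}) \rhd_2 g,\ h \rhd_1 s)$. Define $\phi, \psi : G \times \Gamma \to G \bowtie \Gamma$ by $\phi(h,t) = (e,t)$, $\psi(h,t) = (h,t)$. Then for all $(g,s) \in G \bowtie \Gamma$ and $(h,t) \in G \times \Gamma$: $((h,t) \tilde\rhd_2 (g,s)) \cdot \phi(h,t) = \phi((g,s) \tilde\rhd_1 (h,t)) \cdot (g,s)$ in $G \bowtie \Gamma$. -/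
/-- For `φ(h,t) = (e,t)`:  `((h,t) ⋗₂ (g,s)) · φ(h,t) = φ((g,s) ⋗₁ (h,t)) · (g,s)` in
the Zappa–Szép product `G ⋈ Γ`. -/
theorem statement_10 {G Γ : Type*} [Group G] [Group Γ]
    (r1 : G → Γ → Γ) (r2 : Γ → G → G) (h : IsMatchedPair r1 r2) :
    ∀ x a : G × Γ,
      zsMul r1 r2 (tR2 r1 r2 a x) ((1 : G), a.2)
        = zsMul r1 r2 ((1 : G), (tR1 r1 r2 x a).2) x := by
  obtain ⟨h1, h2, h3, h4, h5, h6, h7, h8⟩ := h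
  intro x a
  have key : ∀ (u : Γ) (g : G), r2 (r1 g u) g⁻¹ = (r2 u g)⁻¹ := by
    intro u g
    have e := h8 (r1 g u) g g⁻¹
    rw [mul_inv_cancel, h6, ← h2, inv_mul_cancel, h1] at e
    exact inv_eq_of_mul_eq_one_right e.symm |>.symm
  have inv1 : ∀ (g : G) (u : Γ), r1 g⁻¹ (r1 g u) = u := by
    intro g u; rw [← h2, inv_mul_cancel, h1]
  simp only [zsMul, tR2, tR1, h6, inv_one, h1, key, inv_inv, mul_one, one_mul, inv1,
    Prod.mk.injEq]
  constructor
  · trivial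
  · group
end

section
/- Let $\mathcal{C}$ be a $(G,\Gamma)$-crossed monoidal category for a matched pair $(G,\Gamma)$. If a homogeneous object $\lambda \in \mathcal{C}_{\partial\lambda}$ has a left dual $\lambda^\vee$ with evaluation $\mathrm{ev}_\lambda : \lambda^\vee \otimes \lambda \to \mathbf{1}$ and coevaluation $\mathrm{coev}_\lambda : \mathbf{1} \to \lambda \otimes \lambda^\vee$, then for any $g \in G$, the object ${}^g\lambda := \gamma^{\mathcal{C}}(g)(\lambda)$ has a left dual given by ${}^{\partial\lambda \rhd_2 g}(\lambda^\vee)$, with evaluation ${}^g\mathrm{ev}_\lambda$ and coevaluation ${}^{\partial\lambda \rhd_2 g}\mathrm{coev}_\lambda$ (composed with the canonical coherence isomorphisms), satisfying the zigzag (conjugate) equations. -/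
open CategoryTheory MonoidalCategory


section Aux
variable {C : Type*} [Category C] [MonoidalCategory C]

lemma aux_zig1 (F F' : C ⥤ C) (lam lamd : C)
    (ev : lamd ⊗ lam ⟶ 𝟙_ C) (coev : 𝟙_ C ⟶ lam ⊗ lamd)
    (hz1 : (λ_ lam).inv ≫ (coev ▷ lam) ≫ (α_ lam lamd lam).hom ≫ (lam ◁ ev) ≫ (ρ_ lam).hom
      = 𝟙 lam)
    (j1h : F'.obj lamd ⊗ F.obj lam ⟶ F.obj (lamd ⊗ lam))
    (j2h : F.obj lam ⊗ F'.obj lamd ⟶ F'.obj (lam ⊗ lamd))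
    (j2i : F'.obj (lam ⊗ lamd) ⟶ F.obj lam ⊗ F'.obj lamd)
    (hj2 : j2i ≫ j2h = 𝟙 _)
    (j3 : F'.obj (lam ⊗ lamd) ⊗ F.obj lam ⟶ F.obj ((lam ⊗ lamd) ⊗ lam))
    (j4 : F.obj lam ⊗ F.obj (lamd ⊗ lam) ⟶ F.obj (lam ⊗ (lamd ⊗ lam)))
    (j5 : F'.obj (𝟙_ C) ⊗ F.obj lam ⟶ F.obj (𝟙_ C ⊗ lam))
    (j6 : F.obj lam ⊗ F.obj (𝟙_ C) ⟶ F.obj (lam ⊗ 𝟙_ C))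
    (φFh : 𝟙_ C ⟶ F.obj (𝟙_ C)) (φFi : F.obj (𝟙_ C) ⟶ 𝟙_ C) (hφ : φFi ≫ φFh = 𝟙 _)
    (φF'h : 𝟙_ C ⟶ F'.obj (𝟙_ C))
    (pent : (j2h ▷ F.obj lam) ≫ j3 ≫ F.map (α_ lam lamd lam).hom
        = (α_ (F.obj lam) (F'.obj lamd) (F.obj lam)).hom ≫ (F.obj lam ◁ j1h) ≫ j4)
    (nat_coev : (F'.map coev ▷ F.obj lam) ≫ j3 = j5 ≫ F.map (coev ▷ lam))
    (nat_ev : (F.obj lam ◁ F.map ev) ≫ j6 = j4 ≫ F.map (lam ◁ ev))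
    (unitl : (φF'h ▷ F.obj lam) ≫ j5 ≫ F.map (λ_ lam).hom = (λ_ (F.obj lam)).hom)
    (unitr : (F.obj lam ◁ φFh) ≫ j6 ≫ F.map (ρ_ lam).hom = (ρ_ (F.obj lam)).hom) :
    (λ_ (F.obj lam)).inv ≫ ((φF'h ≫ F'.map coev ≫ j2i) ▷ F.obj lam) ≫
        (α_ (F.obj lam) (F'.obj lamd) (F.obj lam)).hom ≫
        (F.obj lam ◁ (j1h ≫ F.map ev ≫ φFi)) ≫ (ρ_ (F.obj lam)).hom = 𝟙 (F.obj lam) := by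
  have e_unitr : F.obj lam ◁ φFi ≫ (ρ_ (F.obj lam)).hom = j6 ≫ F.map (ρ_ lam).hom := by
    rw [← unitr, ← Category.assoc, ← MonoidalCategory.whiskerLeft_comp, hφ,
      MonoidalCategory.whiskerLeft_id, Category.id_comp]
  have e_unitl : (φF'h ▷ F.obj lam) ≫ j5 = (λ_ (F.obj lam)).hom ≫ F.map (λ_ lam).inv := by
    rw [← unitl, Category.assoc, Category.assoc, ← F.map_comp, Iso.hom_inv_id, F.map_id,
      Category.comp_id]
  have cancel2 : ∀ {Z : C} (h : F'.obj (lam ⊗ lamd) ⊗ F.obj lam ⟶ Z),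
      (j2i ▷ F.obj lam) ≫ (j2h ▷ F.obj lam) ≫ h = h := by
    intro Z h
    rw [← Category.assoc, ← comp_whiskerRight, hj2, id_whiskerRight, Category.id_comp]
  simp only [comp_whiskerRight, MonoidalCategory.whiskerLeft_comp, Category.assoc]
  rw [e_unitr, reassoc_of% nat_ev, ← reassoc_of% pent, cancel2, reassoc_of% nat_coev,
    reassoc_of% e_unitl, Iso.inv_hom_id_assoc, ← F.map_comp, ← F.map_comp, ← F.map_comp,
    ← F.map_comp, hz1, F.map_id]

lemma aux_zig2 (F F' : C ⥤ C) (lam lamd : C)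
    (ev : lamd ⊗ lam ⟶ 𝟙_ C) (coev : 𝟙_ C ⟶ lam ⊗ lamd)
    (hz2 : (ρ_ lamd).inv ≫ (lamd ◁ coev) ≫ (α_ lamd lam lamd).inv ≫ (ev ▷ lamd) ≫
      (λ_ lamd).hom = 𝟙 lamd)
    (j1h : F'.obj lamd ⊗ F.obj lam ⟶ F.obj (lamd ⊗ lam))
    (j2h : F.obj lam ⊗ F'.obj lamd ⟶ F'.obj (lam ⊗ lamd))
    (j2i : F'.obj (lam ⊗ lamd) ⟶ F.obj lam ⊗ F'.obj lamd)
    (hj2 : j2i ≫ j2h = 𝟙 _)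
    (k3h : F.obj (lamd ⊗ lam) ⊗ F'.obj lamd ⟶ F'.obj ((lamd ⊗ lam) ⊗ lamd))
    (k4 : F'.obj lamd ⊗ F'.obj (lam ⊗ lamd) ⟶ F'.obj (lamd ⊗ (lam ⊗ lamd)))
    (k5h : F.obj (𝟙_ C) ⊗ F'.obj lamd ⟶ F'.obj (𝟙_ C ⊗ lamd))
    (k6h : F'.obj lamd ⊗ F'.obj (𝟙_ C) ⟶ F'.obj (lamd ⊗ 𝟙_ C))
    (φFh : 𝟙_ C ⟶ F.obj (𝟙_ C)) (φFi : F.obj (𝟙_ C) ⟶ 𝟙_ C) (hφ : φFi ≫ φFh = 𝟙 _)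
    (φF'h : 𝟙_ C ⟶ F'.obj (𝟙_ C))
    (pent2 : (j1h ▷ F'.obj lamd) ≫ k3h ≫ F'.map (α_ lamd lam lamd).hom
        = (α_ (F'.obj lamd) (F.obj lam) (F'.obj lamd)).hom ≫ (F'.obj lamd ◁ j2h) ≫ k4)
    (nat_ev2 : (F.map ev ▷ F'.obj lamd) ≫ k5h = k3h ≫ F'.map (ev ▷ lamd))
    (nat_coev2 : (F'.obj lamd ◁ F'.map coev) ≫ k4 = k6h ≫ F'.map (lamd ◁ coev))
    (unitl2 : (φFh ▷ F'.obj lamd) ≫ k5h ≫ F'.map (λ_ lamd).hom = (λ_ (F'.obj lamd)).hom)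
    (unitr2 : (F'.obj lamd ◁ φF'h) ≫ k6h ≫ F'.map (ρ_ lamd).hom = (ρ_ (F'.obj lamd)).hom) :
    (ρ_ (F'.obj lamd)).inv ≫ (F'.obj lamd ◁ (φF'h ≫ F'.map coev ≫ j2i)) ≫
        (α_ (F'.obj lamd) (F.obj lam) (F'.obj lamd)).inv ≫
        ((j1h ≫ F.map ev ≫ φFi) ▷ F'.obj lamd) ≫ (λ_ (F'.obj lamd)).hom
      = 𝟙 (F'.obj lamd) := by
  have e_unitl2 : φFi ▷ F'.obj lamd ≫ (λ_ (F'.obj lamd)).hom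
      = k5h ≫ F'.map (λ_ lamd).hom := by
    rw [← unitl2, ← Category.assoc, ← comp_whiskerRight, hφ, id_whiskerRight, Category.id_comp]
  have e_unitr2 : (F'.obj lamd ◁ φF'h) ≫ k6h
      = (ρ_ (F'.obj lamd)).hom ≫ F'.map (ρ_ lamd).inv := by
    rw [← unitr2, Category.assoc, Category.assoc, ← F'.map_comp, Iso.hom_inv_id, F'.map_id,
      Category.comp_id]
  have e_pent2 : (α_ (F'.obj lamd) (F.obj lam) (F'.obj lamd)).inv ≫ (j1h ▷ F'.obj lamd) ≫ k3h
      = (F'.obj lamd ◁ j2h) ≫ k4 ≫ F'.map (α_ lamd lam lamd).inv := by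
    rw [← cancel_mono (F'.map (α_ lamd lam lamd).hom)]
    simp only [Category.assoc, ← F'.map_comp, Iso.inv_hom_id, F'.map_id, Category.comp_id]
    rw [pent2, Iso.inv_hom_id_assoc]
  have cancelL : ∀ {Z : C} (h : F'.obj lamd ⊗ F'.obj (lam ⊗ lamd) ⟶ Z),
      (F'.obj lamd ◁ j2i) ≫ (F'.obj lamd ◁ j2h) ≫ h = h := by
    intro Z h
    rw [← Category.assoc, ← MonoidalCategory.whiskerLeft_comp, hj2,
      MonoidalCategory.whiskerLeft_id, Category.id_comp]
  simp only [comp_whiskerRight, MonoidalCategory.whiskerLeft_comp, Category.assoc]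
  rw [e_unitl2, reassoc_of% nat_ev2, reassoc_of% e_pent2, cancelL, reassoc_of% nat_coev2,
    reassoc_of% e_unitr2, Iso.inv_hom_id_assoc, ← F'.map_comp, ← F'.map_comp, ← F'.map_comp,
    ← F'.map_comp, hz2, F'.map_id]

end Aux


section Bridges
variable {C : Type*} [Category C] [MonoidalCategory C]

lemma pent_bridge1 {A A₀ X₁ X₂ Q M N S W : C}
    (e0 : A = A₀) (e1 : A₀ = X₁) (e2 : X₁ = X₂) (eAX : A = X₂)
    (J'2 : A₀ ⊗ Q ⟶ S) (j3 : S ⊗ A ⟶ W) (Fα : W ⟶ N)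
    (j1h : Q ⊗ A ⟶ M) (Jt1 : X₂ ⊗ M ⟶ N)
    (hp : (J'2 ▷ A) ≫ j3 ≫ Fα
        = eqToHom (by rw [e1]) ≫ (α_ X₁ Q A).hom ≫ (X₁ ◁ j1h) ≫
            (eqToHom (by rw [e2]) ▷ M) ≫ Jt1) :
    (((eqToHom e0 ▷ Q) ≫ J'2) ▷ A) ≫ j3 ≫ Fα
      = (α_ A Q A).hom ≫ (A ◁ j1h) ≫ ((eqToHom eAX ▷ M) ≫ Jt1) := by
  subst e0 e1 e2
  simpa using hp

lemma pent_bridge2 {Q Q₀ Q₁ Q₂ A A₀ D D₀ S N W : C}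
    (eA : A = A₀) (eQ0 : Q₀ = Q) (eQ1 : Q₀ = Q₁) (eQ2 : Q₁ = Q₂) (eQ : Q = Q₂) (eD : D = D₀)
    (JJ : Q₀ ⊗ A₀ ⟶ D₀) (j1h : Q ⊗ A ⟶ D)
    (J'3 : D₀ ⊗ Q ⟶ W) (Fα : W ⟶ N) (J'2 : A₀ ⊗ Q ⟶ S) (J4 : Q₂ ⊗ S ⟶ N)
    (hJJ : JJ = eqToHom (by rw [eA, eQ0]) ≫ j1h ≫ eqToHom eD)
    (hp : (JJ ▷ Q) ≫ J'3 ≫ Fα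
        = eqToHom (by rw [eQ1]) ≫ (α_ Q₁ A₀ Q).hom ≫ (Q₁ ◁ J'2) ≫
            (eqToHom (by rw [eQ2]) ▷ S) ≫ J4) :
    (j1h ▷ Q) ≫ ((eqToHom eD ▷ Q) ≫ J'3) ≫ Fα
      = (α_ Q A Q).hom ≫ (Q ◁ ((eqToHom eA ▷ Q) ≫ J'2)) ≫ ((eqToHom eQ ▷ S) ≫ J4) := by
  subst eA eD eQ1 eQ2 eQ0
  rw [hJJ] at hp
  simpa using hp

lemma natev_bridge {A X₂ M U N V : C} (e : A = X₂) (fev : M ⟶ U)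
    (Jt1' : X₂ ⊗ U ⟶ V) (Jt1 : X₂ ⊗ M ⟶ N) (Fle : N ⟶ V)
    (h : (X₂ ◁ fev) ≫ Jt1' = Jt1 ≫ Fle) :
    (A ◁ fev) ≫ (eqToHom e ▷ U) ≫ Jt1' = ((eqToHom e ▷ M) ≫ Jt1) ≫ Fle := by
  subst e; simpa using h

lemma natev2_bridge {D D₀ U U₀ Q W R : C} (eD : D = D₀) (eU : U = U₀)
    (fev : D ⟶ U) (J5 : U₀ ⊗ Q ⟶ W) (J3 : D₀ ⊗ Q ⟶ R) (m : R ⟶ W)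
    (h : ((eqToHom eD.symm ≫ fev ≫ eqToHom eU) ▷ Q) ≫ J5 = J3 ≫ m) :
    (fev ▷ Q) ≫ (eqToHom eU ▷ Q) ≫ J5 = ((eqToHom eD ▷ Q) ≫ J3) ≫ m := by
  subst eD eU; simpa using h

lemma unitr_bridge {A X₂ U V : C} (e : A = X₂) (φh : 𝟙_ C ⟶ U)
    (Jt1' : X₂ ⊗ U ⟶ V) (Fρ : V ⟶ A)
    (h : (X₂ ◁ φh) ≫ Jt1' ≫ Fρ = eqToHom (by rw [e]) ≫ (ρ_ A).hom) :
    (A ◁ φh) ≫ ((eqToHom e ▷ U) ≫ Jt1') ≫ Fρ = (ρ_ A).hom := by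
  subst e; simpa using h

lemma unitl2_bridge {U U₀ Q W : C} (e : U = U₀) (φh : 𝟙_ C ⟶ U)
    (J5 : U₀ ⊗ Q ⟶ W) (m : W ⟶ Q)
    (h : ((φh ≫ eqToHom e) ▷ Q) ≫ J5 ≫ m = (λ_ Q).hom) :
    (φh ▷ Q) ≫ ((eqToHom e ▷ Q) ≫ J5) ≫ m = (λ_ Q).hom := by
  subst e; simpa using h

end Bridges

/-- In a `(G,Γ)`-crossed monoidal category (in the sense of Natale), if a homogeneous object
`λ` of degree `s` has a left dual `λ^∨` (with evaluation and coevaluation satisfying the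
zigzag equations), then for any `g : G` the object `ᵍλ` has left dual `^{∂λ ▷₂ g}(λ^∨)`,
with evaluation `ᵍ(ev_λ)` and coevaluation `^{∂λ ▷₂ g}(coev_λ)` (composed with the canonical
coherence isomorphisms `J` and `φ`), again satisfying the zigzag equations. -/
theorem statement_15 {G Γ : Type*} [Group G] [Group Γ]
    (r1 : G → Γ → Γ) (r2 : Γ → G → G)
    (h1id : ∀ s, r1 1 s = s) (h1mul : ∀ g h s, r1 (g * h) s = r1 g (r1 h s))
    (h2id : ∀ g, r2 1 g = g) (h2mul : ∀ s t g, r2 (s * t) g = r2 s (r2 t g))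
    (h1one : ∀ g, r1 g 1 = 1) (h2one : ∀ s, r2 s 1 = 1)
    (hcomp1 : ∀ g s t, r1 g (s * t) = r1 (r2 t g) s * r1 g t)
    (hcomp2 : ∀ s g h, r2 s (g * h) = r2 (r1 h s) g * r2 s h)
    {C : Type*} [Category C] [MonoidalCategory C]
    (P : Γ → C → Prop)
    (γ : G → C ⥤ C)
    (χ : ∀ g h : G, γ h ⋙ γ g ≅ γ (g * h))
    (ι : 𝟭 C ≅ γ 1)
    (haxiom1 : ∀ (g : G) (s : Γ) (X : C), P s X → P (r1 g s) ((γ g).obj X))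
    (J : ∀ (g : G) (t : Γ) (X Y : C), ((γ (r2 t g)).obj X ⊗ (γ g).obj Y) ≅ (γ g).obj (X ⊗ Y))
    (φ : ∀ g : G, 𝟙_ C ≅ (γ g).obj (𝟙_ C))
    (hJnat : ∀ (g : G) (t : Γ) (X X' Y Y' : C) (f : X ⟶ X') (k : Y ⟶ Y'),
      ((γ (r2 t g)).map f ⊗ₘ (γ g).map k) ≫ (J g t X' Y').hom
        = (J g t X Y).hom ≫ (γ g).map (f ⊗ₘ k))
    (hpent : ∀ (g : G) (t u : Γ) (X Y Z : C), P t Y → P u Z →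
      ((J (r2 u g) t X Y).hom ▷ (γ g).obj Z) ≫ (J g u (X ⊗ Y) Z).hom ≫
          (γ g).map (α_ X Y Z).hom
        = eqToHom (by rw [h2mul]) ≫
            (α_ ((γ (r2 (t * u) g)).obj X) ((γ (r2 u g)).obj Y) ((γ g).obj Z)).hom ≫
            ((γ (r2 (t * u) g)).obj X ◁ (J g u Y Z).hom) ≫ (J g (t * u) X (Y ⊗ Z)).hom)
    (hunitl : ∀ (g : G) (t : Γ) (Y : C), P t Y →
      ((φ (r2 t g)).hom ▷ (γ g).obj Y) ≫ (J g t (𝟙_ C) Y).hom ≫ (γ g).map (λ_ Y).hom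
        = (λ_ ((γ g).obj Y)).hom)
    (hunitr : ∀ (g : G) (X : C),
      ((γ (r2 1 g)).obj X ◁ (φ g).hom) ≫ (J g 1 X (𝟙_ C)).hom ≫ (γ g).map (ρ_ X).hom
        = eqToHom (by rw [h2id]) ≫ (ρ_ ((γ g).obj X)).hom)
    (hchiJ : ∀ (g h : G) (t : Γ) (X Y : C), P t Y →
      (J g (r1 h t) ((γ (r2 t h)).obj X) ((γ h).obj Y)).hom ≫
          (γ g).map (J h t X Y).hom ≫ (χ g h).hom.app (X ⊗ Y)
        = ((χ (r2 (r1 h t) g) (r2 t h)).hom.app X ⊗ₘ (χ g h).hom.app Y) ≫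
            eqToHom (by rw [hcomp2]) ≫ (J (g * h) t X Y).hom)
    (hchiφ : ∀ g h : G,
      (φ g).hom ≫ (γ g).map (φ h).hom ≫ (χ g h).hom.app (𝟙_ C) = (φ (g * h)).hom)
    (hιJ : ∀ (t : Γ) (X Y : C), P t Y →
      ι.hom.app (X ⊗ Y)
        = (ι.hom.app X ⊗ₘ ι.hom.app Y) ≫ eqToHom (by rw [h2one]) ≫ (J 1 t X Y).hom)
    (hιφ : ι.hom.app (𝟙_ C) = (φ 1).hom) :
    ∀ (s : Γ) (g : G) (lam lamd : C), P s lam → P s⁻¹ lamd →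
      ∀ (ev : lamd ⊗ lam ⟶ 𝟙_ C) (coev : 𝟙_ C ⟶ lam ⊗ lamd),
        (λ_ lam).inv ≫ (coev ▷ lam) ≫ (α_ lam lamd lam).hom ≫ (lam ◁ ev) ≫ (ρ_ lam).hom
            = 𝟙 lam →
        (ρ_ lamd).inv ≫ (lamd ◁ coev) ≫ (α_ lamd lam lamd).inv ≫ (ev ▷ lamd) ≫
            (λ_ lamd).hom = 𝟙 lamd →
        let ev' : ((γ (r2 s g)).obj lamd ⊗ (γ g).obj lam) ⟶ 𝟙_ C :=
          (J g s lamd lam).hom ≫ (γ g).map ev ≫ (φ g).inv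
        let coev' : 𝟙_ C ⟶ ((γ g).obj lam ⊗ (γ (r2 s g)).obj lamd) :=
          (φ (r2 s g)).hom ≫ (γ (r2 s g)).map coev ≫ (J (r2 s g) s⁻¹ lam lamd).inv ≫
            eqToHom (by rw [← h2mul, inv_mul_cancel, h2id])
        ((λ_ ((γ g).obj lam)).inv ≫ (coev' ▷ (γ g).obj lam) ≫
            (α_ ((γ g).obj lam) ((γ (r2 s g)).obj lamd) ((γ g).obj lam)).hom ≫
            ((γ g).obj lam ◁ ev') ≫ (ρ_ ((γ g).obj lam)).hom = 𝟙 ((γ g).obj lam)) ∧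
        ((ρ_ ((γ (r2 s g)).obj lamd)).inv ≫ ((γ (r2 s g)).obj lamd ◁ coev') ≫
            (α_ ((γ (r2 s g)).obj lamd) ((γ g).obj lam) ((γ (r2 s g)).obj lamd)).inv ≫
            (ev' ▷ (γ (r2 s g)).obj lamd) ≫ (λ_ ((γ (r2 s g)).obj lamd)).hom
          = 𝟙 ((γ (r2 s g)).obj lamd)) := by
  intro s g lam lamd hlam hlamd ev coev hz1 hz2
  have eg : r2 s⁻¹ (r2 s g) = g := by rw [← h2mul, inv_mul_cancel, h2id]
  have eg2 : r2 s (r2 s⁻¹ (r2 s g)) = r2 s g := by rw [← h2mul, mul_inv_cancel, h2id]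
  have Jtcast : ∀ (a : G) {t t' : Γ} (h : t = t') (X Y : C),
      (J a t X Y).hom
        = (eqToHom (show (γ (r2 t a)).obj X = (γ (r2 t' a)).obj X by rw [h]) ▷ (γ a).obj Y) ≫
            (J a t' X Y).hom := by
    rintro a t t' rfl X Y; simp
  have Jgcast : ∀ {a b : G} (h : a = b) (t : Γ) (X Y : C),
      (J a t X Y).hom
        = eqToHom (by rw [h]) ≫ (J b t X Y).hom ≫ eqToHom (by rw [h]) := by
    rintro a b rfl t X Y; simp
  have Fcast : ∀ {a b : G} (h : a = b) {X Y : C} (f : X ⟶ Y),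
      (γ a).map f = eqToHom (by rw [h]) ≫ (γ b).map f ≫ eqToHom (by rw [h]) := by
    rintro a b rfl X Y f; simp
  have φcast : ∀ {a b : G} (h : a = b), (φ a).hom = (φ b).hom ≫ eqToHom (by rw [h]) := by
    rintro a b rfl; simp
  have e0 : (γ g).obj lam = (γ (r2 s⁻¹ (r2 s g))).obj lam := by rw [eg]
  have eX2 : (γ g).obj lam = (γ (r2 1 g)).obj lam := by rw [h2id]
  have eD : (γ g).obj (lamd ⊗ lam) = (γ (r2 s⁻¹ (r2 s g))).obj (lamd ⊗ lam) := by rw [eg]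
  have eU : (γ g).obj (𝟙_ C) = (γ (r2 s⁻¹ (r2 s g))).obj (𝟙_ C) := by rw [eg]
  have eQ2 : (γ (r2 s g)).obj lamd = (γ (r2 1 (r2 s g))).obj lamd := by rw [h2id]
  intro ev' coev'
  constructor
  · refine aux_zig1 (γ g) (γ (r2 s g)) lam lamd ev coev hz1
      (J g s lamd lam).hom
      ((eqToHom e0 ▷ (γ (r2 s g)).obj lamd) ≫ (J (r2 s g) s⁻¹ lam lamd).hom)
      ((J (r2 s g) s⁻¹ lam lamd).inv ≫ eqToHom (by rw [← h2mul, inv_mul_cancel, h2id]))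
      ?_
      (J g s (lam ⊗ lamd) lam).hom
      ((eqToHom eX2 ▷ (γ g).obj (lamd ⊗ lam)) ≫ (J g 1 lam (lamd ⊗ lam)).hom)
      (J g s (𝟙_ C) lam).hom
      ((eqToHom eX2 ▷ (γ g).obj (𝟙_ C)) ≫ (J g 1 lam (𝟙_ C)).hom)
      (φ g).hom (φ g).inv (φ g).inv_hom_id
      (φ (r2 s g)).hom
      ?_ ?_ ?_ ?_ ?_
    · simp
    · have hp1 := hpent g s⁻¹ s lam lamd lam hlamd hlam
      rw [Jtcast g (inv_mul_cancel s) lam (lamd ⊗ lam)] at hp1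
      exact pent_bridge1 e0
        (show (γ (r2 s⁻¹ (r2 s g))).obj lam = (γ (r2 (s⁻¹ * s) g)).obj lam by rw [h2mul])
        (show (γ (r2 (s⁻¹ * s) g)).obj lam = (γ (r2 1 g)).obj lam by rw [inv_mul_cancel])
        eX2 _ _ _ _ _ hp1
    · simpa using hJnat g s (𝟙_ C) (lam ⊗ lamd) lam lam coev (𝟙 lam)
    · have nv := hJnat g 1 lam lam (lamd ⊗ lam) (𝟙_ C) (𝟙 lam) ev
      simp at nv
      exact natev_bridge eX2 ((γ g).map ev) _ _ _ nv
    · exact hunitl g s lam hlam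
    · exact unitr_bridge eX2 (φ g).hom _ _ (hunitr g lam)
  · refine aux_zig2 (γ g) (γ (r2 s g)) lam lamd ev coev hz2
      (J g s lamd lam).hom
      ((eqToHom e0 ▷ (γ (r2 s g)).obj lamd) ≫ (J (r2 s g) s⁻¹ lam lamd).hom)
      ((J (r2 s g) s⁻¹ lam lamd).inv ≫ eqToHom (by rw [← h2mul, inv_mul_cancel, h2id]))
      ?_
      ((eqToHom eD ▷ (γ (r2 s g)).obj lamd) ≫ (J (r2 s g) s⁻¹ (lamd ⊗ lam) lamd).hom)
      ((eqToHom eQ2 ▷ (γ (r2 s g)).obj (lam ⊗ lamd)) ≫ (J (r2 s g) 1 lamd (lam ⊗ lamd)).hom)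
      ((eqToHom eU ▷ (γ (r2 s g)).obj lamd) ≫ (J (r2 s g) s⁻¹ (𝟙_ C) lamd).hom)
      ((eqToHom eQ2 ▷ (γ (r2 s g)).obj (𝟙_ C)) ≫ (J (r2 s g) 1 lamd (𝟙_ C)).hom)
      (φ g).hom (φ g).inv (φ g).inv_hom_id
      (φ (r2 s g)).hom
      ?_ ?_ ?_ ?_ ?_
    · simp
    · have hp2 := hpent (r2 s g) s s⁻¹ lamd lam lamd hlam hlamd
      rw [Jtcast (r2 s g) (mul_inv_cancel s) lamd (lam ⊗ lamd)] at hp2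
      exact pent_bridge2 e0
        (show (γ (r2 s (r2 s⁻¹ (r2 s g)))).obj lamd = (γ (r2 s g)).obj lamd by rw [eg2])
        (show (γ (r2 s (r2 s⁻¹ (r2 s g)))).obj lamd
            = (γ (r2 (s * s⁻¹) (r2 s g))).obj lamd by rw [h2mul])
        (show (γ (r2 (s * s⁻¹) (r2 s g))).obj lamd
            = (γ (r2 1 (r2 s g))).obj lamd by rw [mul_inv_cancel])
        eQ2 eD _ _ _ _ _ _ (Jgcast eg s lamd lam) hp2
    · have nv2 := hJnat (r2 s g) s⁻¹ (lamd ⊗ lam) (𝟙_ C) lamd lamd ev (𝟙 lamd)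
      simp at nv2
      rw [Fcast eg ev] at nv2
      exact natev2_bridge eD eU ((γ g).map ev) _ _ _ nv2
    · have nc2 := hJnat (r2 s g) 1 lamd lamd (𝟙_ C) (lam ⊗ lamd) (𝟙 lamd) coev
      simp at nc2
      exact natev_bridge eQ2 ((γ (r2 s g)).map coev) _ _ _ nc2
    · have ul2 := hunitl (r2 s g) s⁻¹ lamd hlamd
      rw [φcast eg] at ul2
      exact unitl2_bridge eU (φ g).hom _ _ ul2
    · exact unitr_bridge eQ2 (φ (r2 s g)).hom _ _ (hunitr (r2 s g) lamd)
end
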